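/- For any hypersequent rule (Hr) of the restricted form with conclusion G | Σ₁¹,…,Σ_{n₁}¹, Γ₁ ⇒ Π₁ | … | Σ₁ᵏ,…,Σ_{nₖ}ᵏ, Γₖ ⇒ Πₖ and premiss sets M₁,…,Mₖ of the form G | Δʲᵢ, Γᵢ ⇒ Πᵢ (with each Δʲᵢ equal to some Σ_q^p, and Γᵢ, Πᵢ non-empty), HLJ extended with (Hr) is equivalent to Gentzen's natural deduction calculus NJ extended with the translated higher-level natural deduction rule Nr: a propositional intuitionistic formula φ satisfies ⊢_{HLJ+Hr} ⇒ φ if and only if ⊢_{NJ+Nr} φ. -/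

import Mathlib

/- Formulas of intuitionistic propositional logic -/
inductive Formula : Type
  | atom : ℕ → Formula
  | bot  : Formula
  | conj : Formula → Formula → Formula
  | disj : Formula → Formula → Formula
  | impl : Formula → Formula → Formula

/-- A sequent Γ ⇒ Π. -/
abbrev Sequent : Type := Multiset Formula × Option Formula

/-- A hypersequent. -/
abbrev Hyper : Type := Multiset Sequent

/-- A hypersequent rule (Hr) of the restricted form, given schematically:
the i-th component of its conclusion is σ₁ⁱ, …, σ_{nᵢ}ⁱ, Γᵢ ⇒ Πᵢ, where the
σ's are schematic formula variables (the variable σ_q^p is encoded by the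
pair of indices (p, q)), and the set Mᵢ of premisses linked to it consists
of the hypersequents G | Δʲᵢ, Γᵢ ⇒ Πᵢ where each Δʲᵢ is some σ_q^p (recorded
as the list of references `(comps.get i).2`); `(comps.get i).1` is nᵢ.
The contexts Γᵢ and Πᵢ are non-empty (Πᵢ holds exactly one formula). -/
structure HLRule : Type where
  comps : List (ℕ × List (ℕ × ℕ))

/-- The multiset σ₁ⁱ, …, σ_{nᵢ}ⁱ of the i-th conclusion component under the
instantiation `v` of the schematic variables (σ_q^p ↦ `v p q`). -/
def sigMS (R : HLRule) (v : ℕ → ℕ → Formula) (i : ℕ) : Multiset Formula :=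
  Multiset.ofList (List.ofFn (fun j : Fin (R.comps.getD i (0, [])).1 => v i j))

/-- Derivability in HLJ + (Hr): the rules of HLJ together with the rule (Hr),
whose instances are given by an instantiation `v` of the schematic variables,
a shared hypersequent context `G`, and contexts Γᵢ ⇒ Πᵢ (`ctxΓ i`, `ctxPi i`)
for the k components. -/
inductive HDer (R : HLRule) : Hyper → Prop
  | ax (φ : Formula) : HDer R {(({φ} : Multiset Formula), some φ)}
  | botL (Δ : Option Formula) : HDer R {(({Formula.bot} : Multiset Formula), Δ)}
  | disjL {G : Hyper} {Γ : Multiset Formula} {Δ : Option Formula} (φ ψ : Formula) :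
      HDer R ((φ ::ₘ Γ, Δ) ::ₘ G) → HDer R ((ψ ::ₘ Γ, Δ) ::ₘ G) →
      HDer R ((Formula.disj φ ψ ::ₘ Γ, Δ) ::ₘ G)
  | disjR1 {G : Hyper} {Γ : Multiset Formula} (φ ψ : Formula) :
      HDer R ((Γ, some φ) ::ₘ G) → HDer R ((Γ, some (Formula.disj φ ψ)) ::ₘ G)
  | disjR2 {G : Hyper} {Γ : Multiset Formula} (φ ψ : Formula) :
      HDer R ((Γ, some ψ) ::ₘ G) → HDer R ((Γ, some (Formula.disj φ ψ)) ::ₘ G)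
  | conjL {G : Hyper} {Γ : Multiset Formula} {Δ : Option Formula} (φ ψ : Formula) :
      HDer R ((φ ::ₘ ψ ::ₘ Γ, Δ) ::ₘ G) → HDer R ((Formula.conj φ ψ ::ₘ Γ, Δ) ::ₘ G)
  | conjR {G : Hyper} {Γ : Multiset Formula} (φ ψ : Formula) :
      HDer R ((Γ, some φ) ::ₘ G) → HDer R ((Γ, some ψ) ::ₘ G) →
      HDer R ((Γ, some (Formula.conj φ ψ)) ::ₘ G)
  | implL {G : Hyper} {Γ : Multiset Formula} {Δ : Option Formula} (φ ψ : Formula) :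
      HDer R ((Γ, some φ) ::ₘ G) → HDer R ((ψ ::ₘ Γ, Δ) ::ₘ G) →
      HDer R ((Formula.impl φ ψ ::ₘ Γ, Δ) ::ₘ G)
  | implR {G : Hyper} {Γ : Multiset Formula} (φ ψ : Formula) :
      HDer R ((φ ::ₘ Γ, some ψ) ::ₘ G) → HDer R ((Γ, some (Formula.impl φ ψ)) ::ₘ G)
  | iw {G : Hyper} {Γ : Multiset Formula} {Δ : Option Formula} (φ : Formula) :
      HDer R ((Γ, Δ) ::ₘ G) → HDer R ((φ ::ₘ Γ, Δ) ::ₘ G)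
  | ic {G : Hyper} {Γ : Multiset Formula} {Δ : Option Formula} (φ : Formula) :
      HDer R ((φ ::ₘ φ ::ₘ Γ, Δ) ::ₘ G) → HDer R ((φ ::ₘ Γ, Δ) ::ₘ G)
  | cut {G : Hyper} {Γ Γ' : Multiset Formula} {Δ : Option Formula} (φ : Formula) :
      HDer R ((Γ, some φ) ::ₘ G) → HDer R ((φ ::ₘ Γ', Δ) ::ₘ G) →
      HDer R ((Γ + Γ', Δ) ::ₘ G)
  | ew {G : Hyper} (s : Sequent) : HDer R G → HDer R (s ::ₘ G)
  | ec {G : Hyper} (s : Sequent) : HDer R (s ::ₘ s ::ₘ G) → HDer R (s ::ₘ G)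
  | hr (v : ℕ → ℕ → Formula) (G : Hyper)
      (ctxΓ : ℕ → Multiset Formula) (ctxPi : ℕ → Formula)
      (hprem : ∀ i : Fin R.comps.length, ∀ r ∈ (R.comps.get i).2,
        HDer R ((v r.1 r.2 ::ₘ ctxΓ i, some (ctxPi i)) ::ₘ G)) :
      HDer R (((List.ofFn (fun i : Fin R.comps.length =>
        ((sigMS R v i + ctxΓ i, some (ctxPi i)) : Sequent))) : Multiset Sequent) + G)

/-- An "upper inference" discharged by the higher-level natural deduction
rule: it concludes its target φᵢ from the premisses σ₁ⁱ, …, σ_{nᵢ}ⁱ together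
with one subderivation of φᵢ from each discharged assumption δ. -/
structure Upper : Type where
  sigmas : List Formula
  deltas : List Formula
  tgt : Formula

/-- The i-th upper inference of an application of the translated rule Nr,
for the instantiation `v` of the schematic variables and the choice `w i` of
the formula φᵢ; its discharged assumptions are the instantiations of the
Δʲᵢ, read as ⊥ when Mᵢ is empty. -/
def mkUpper (R : HLRule) (v : ℕ → ℕ → Formula) (w : ℕ → Formula) (i : ℕ) : Upper :=
  { sigmas := List.ofFn (fun j : Fin (R.comps.getD i (0, [])).1 => v i j)
    deltas := if (R.comps.getD i (0, [])).2 = [] then [Formula.bot]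
              else (R.comps.getD i (0, [])).2.map (fun r => v r.1 r.2)
    tgt := w i }

/-- Derivability in NJ + Nr: Gentzen's natural deduction calculus NJ for
intuitionistic propositional logic extended with the higher-level rule Nr
translating the hypersequent rule `R`.  The parameter `T` records the upper
inferences currently enabled (dischargeable): the rule Nr (`nr`) derives φ
from k subderivations of φ, where the i-th subderivation may moreover use
the i-th upper inference (`upper`). -/
inductive NJD (R : HLRule) : Set Upper → List Formula → Formula → Prop
  | hyp {T : Set Upper} {Γ : List Formula} {φ : Formula} : φ ∈ Γ → NJD R T Γ φ
  | conjI {T Γ} {φ ψ : Formula} :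
      NJD R T Γ φ → NJD R T Γ ψ → NJD R T Γ (Formula.conj φ ψ)
  | conjE1 {T Γ} {φ ψ : Formula} : NJD R T Γ (Formula.conj φ ψ) → NJD R T Γ φ
  | conjE2 {T Γ} {φ ψ : Formula} : NJD R T Γ (Formula.conj φ ψ) → NJD R T Γ ψ
  | disjI1 {T Γ} {φ ψ : Formula} : NJD R T Γ φ → NJD R T Γ (Formula.disj φ ψ)
  | disjI2 {T Γ} {φ ψ : Formula} : NJD R T Γ ψ → NJD R T Γ (Formula.disj φ ψ)
  | disjE {T Γ} {φ ψ χ : Formula} :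
      NJD R T Γ (Formula.disj φ ψ) → NJD R T (φ :: Γ) χ → NJD R T (ψ :: Γ) χ →
      NJD R T Γ χ
  | implI {T Γ} {φ ψ : Formula} : NJD R T (φ :: Γ) ψ → NJD R T Γ (Formula.impl φ ψ)
  | implE {T Γ} {φ ψ : Formula} :
      NJD R T Γ (Formula.impl φ ψ) → NJD R T Γ φ → NJD R T Γ ψ
  | botE {T Γ} {φ : Formula} : NJD R T Γ Formula.bot → NJD R T Γ φ
  | upper {T Γ} {u : Upper} (hu : u ∈ T) :
      (∀ σ ∈ u.sigmas, NJD R T Γ σ) →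
      (∀ δ ∈ u.deltas, NJD R T (δ :: Γ) u.tgt) →
      NJD R T Γ u.tgt
  | nr {T Γ} {φ : Formula} (v : ℕ → ℕ → Formula) (w : ℕ → Formula) :
      (∀ i : Fin R.comps.length, NJD R (insert (mkUpper R v w i) T) Γ φ) →
      NJD R T Γ φ


/-! ### Auxiliary formula operations -/

/-- Conjunction of a list of formulas (⊤ := ⊥ → ⊥ for the empty list). -/
def cjs : List Formula → Formula
  | [] => Formula.impl Formula.bot Formula.bot
  | a :: l => Formula.conj a (cjs l)

/-- Disjunction of a list of formulas (⊥ for the empty list). -/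
def djs : List Formula → Formula
  | [] => Formula.bot
  | a :: l => Formula.disj a (djs l)

/-- The formula interpreting an upper inference. -/
def FU (u : Upper) : Formula := Formula.impl (cjs u.sigmas) (djs u.deltas)

/-- The formula interpreting a sequent. -/
noncomputable def ints (s : Sequent) : Formula :=
  Formula.impl (cjs s.1.toList) (s.2.getD Formula.bot)

/-! ### HLJ toolkit -/

section HLJ

variable {R : HLRule}

theorem hder_of_eq {H H' : Hyper} (h : HDer R H) (e : H = H') : HDer R H' := e ▸ h

theorem seq_congr {G : Hyper} {Po : Option Formula} {X Y : Multiset Formula} (e : X = Y) :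
    ((X, Po) ::ₘ G : Hyper) = ((Y, Po) ::ₘ G) := by rw [e]

theorem hew_left {H : Hyper} (G : Hyper) (h : HDer R H) : HDer R (G + H) := by
  induction G using Multiset.induction with
  | empty => simpa using h
  | cons s G ih => rw [Multiset.cons_add]; exact HDer.ew s ih

theorem hsingle {s : Sequent} (G : Hyper) (h : HDer R {s}) : HDer R (s ::ₘ G) := by
  have := hew_left (R := R) G h
  apply hder_of_eq this
  rw [add_comm]
  simp [Multiset.singleton_add]

theorem wkM {G : Hyper} {Γ : Multiset Formula} {Po : Option Formula}
    (Δ : Multiset Formula) (h : HDer R ((Γ, Po) ::ₘ G)) :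
    HDer R ((Δ + Γ, Po) ::ₘ G) := by
  induction Δ using Multiset.induction with
  | empty => simpa using h
  | cons a Δ ih => rw [Multiset.cons_add]; exact HDer.iw a ih

theorem ctrM {G : Hyper} {Po : Option Formula}
    (Δ : Multiset Formula) {Γ : Multiset Formula}
    (h : HDer R ((Δ + Δ + Γ, Po) ::ₘ G)) :
    HDer R ((Δ + Γ, Po) ::ₘ G) := by
  induction Δ using Multiset.induction generalizing Γ with
  | empty => simpa using h
  | cons a Δ ih =>
    have h1 : HDer R ((a ::ₘ a ::ₘ (Δ + Δ + Γ), Po) ::ₘ G) :=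
      hder_of_eq h (seq_congr (by simp only [← Multiset.singleton_add]; abel))
    have h2 := HDer.ic a h1
    have h3 : HDer R ((Δ + Δ + (a ::ₘ Γ), Po) ::ₘ G) :=
      hder_of_eq h2 (seq_congr (by simp only [← Multiset.singleton_add]; abel))
    have h4 := ih h3
    exact hder_of_eq h4 (seq_congr (by simp only [← Multiset.singleton_add]; abel))

theorem axW {G : Hyper} {φ : Formula} (Δ : Multiset Formula) :
    HDer R ((φ ::ₘ Δ, some φ) ::ₘ G) := by
  have h0 : HDer R (({φ}, some φ) ::ₘ G) := hsingle G (HDer.ax φ)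
  have h1 := wkM (R := R) Δ h0
  exact hder_of_eq h1 (seq_congr (by simp only [← Multiset.singleton_add]; abel))

theorem botW {G : Hyper} {Po : Option Formula} (Δ : Multiset Formula) :
    HDer R ((Formula.bot ::ₘ Δ, Po) ::ₘ G) := by
  have h0 : HDer R (({Formula.bot}, Po) ::ₘ G) := hsingle G (HDer.botL Po)
  have h1 := wkM (R := R) Δ h0
  exact hder_of_eq h1 (seq_congr (by simp only [← Multiset.singleton_add]; abel))

theorem memAnte {G : Hyper} {Γ : Multiset Formula} {φ : Formula} (h : φ ∈ Γ) :
    HDer R ((Γ, some φ) ::ₘ G) := by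
  obtain ⟨Γ₀, rfl⟩ := Multiset.exists_cons_of_mem h
  exact axW Γ₀

theorem contractMem {G : Hyper} {Γ : Multiset Formula} {Po : Option Formula} {a : Formula}
    (hm : a ∈ Γ) (h : HDer R ((a ::ₘ Γ, Po) ::ₘ G)) : HDer R ((Γ, Po) ::ₘ G) := by
  obtain ⟨Γ₀, rfl⟩ := Multiset.exists_cons_of_mem hm
  exact HDer.ic a h

theorem cjsIntroH {G : Hyper} {Γ : Multiset Formula} :
    ∀ (l : List Formula), (∀ σ ∈ l, HDer R ((Γ, some σ) ::ₘ G)) →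
      HDer R ((Γ, some (cjs l)) ::ₘ G)
  | [], _ => by
      show HDer R ((Γ, some (Formula.impl Formula.bot Formula.bot)) ::ₘ G)
      exact HDer.implR _ _ (botW Γ)
  | a :: l, h => by
      refine HDer.conjR a (cjs l) (h a (by simp)) (cjsIntroH l fun σ hσ => h σ (by simp [hσ]))

theorem djsElimH {G : Hyper} {Γ : Multiset Formula} {Po : Option Formula} :
    ∀ (l : List Formula), (∀ δ ∈ l, HDer R ((δ ::ₘ Γ, Po) ::ₘ G)) →
      HDer R ((djs l ::ₘ Γ, Po) ::ₘ G)
  | [], _ => botW Γ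
  | a :: l, h => by
      exact HDer.disjL a (djs l) (h a (by simp)) (djsElimH l fun δ hδ => h δ (by simp [hδ]))

theorem djsIntroH {G : Hyper} {Γ : Multiset Formula} {a : Formula} :
    ∀ (l : List Formula), a ∈ l → HDer R ((Γ, some a) ::ₘ G) →
      HDer R ((Γ, some (djs l)) ::ₘ G)
  | b :: l, hm, h => by
      rcases List.mem_cons.1 hm with rfl | hm
      · exact HDer.disjR1 _ _ h
      · exact HDer.disjR2 _ _ (djsIntroH l hm h)

theorem cjsAntH {G : Hyper} {Po : Option Formula} :
    ∀ (l : List Formula) (Δ : Multiset Formula),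
      HDer R (((l : Multiset Formula) + Δ, Po) ::ₘ G) →
      HDer R ((cjs l ::ₘ Δ, Po) ::ₘ G)
  | [], Δ, h => by
      refine HDer.iw _ ?_
      exact hder_of_eq h (seq_congr (by simp))
  | a :: l, Δ, h => by
      have h1 : HDer R (((l : Multiset Formula) + (a ::ₘ Δ), Po) ::ₘ G) :=
        hder_of_eq h (seq_congr (by
          simp only [← Multiset.cons_coe, ← Multiset.singleton_add]; abel))
      have h2 := cjsAntH l (a ::ₘ Δ) h1
      have h3 : HDer R ((a ::ₘ cjs l ::ₘ Δ, Po) ::ₘ G) :=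
        hder_of_eq h2 (seq_congr (Multiset.cons_swap _ _ _))
      exact HDer.conjL a (cjs l) h3

end HLJ

/-! ### NJ + Nr to HLJ + Hr -/

section ToHLJ

variable {R : HLRule}

theorem sigMS_eq (v : ℕ → ℕ → Formula) (w : ℕ → Formula) (i : ℕ) :
    sigMS R v i = ((mkUpper R v w i).sigmas : Multiset Formula) := rfl

/-- Convert each component `σ's ⇒ Π` of a hypersequent into `⇒ ⋀σ's → Π`. -/
theorem convComps :
    ∀ (c : List (List Formula × Formula)) (G : Hyper),
      HDer R ((c.map (fun p => (((p.1 : Multiset Formula), some p.2) : Sequent)) :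
          Multiset Sequent) + G) →
      HDer R ((c.map (fun p =>
          (((0 : Multiset Formula), some (Formula.impl (cjs p.1) p.2)) : Sequent)) :
          Multiset Sequent) + G)
  | [], G, h => by simpa using h
  | p :: c, G, h => by
      have h1 : HDer R ((((p.1 : Multiset Formula), some p.2) : Sequent) ::ₘ
          ((c.map (fun p => (((p.1 : Multiset Formula), some p.2) : Sequent)) :
            Multiset Sequent) + G)) :=
        hder_of_eq h (by
          simp only [List.map_cons, ← Multiset.cons_coe, Multiset.cons_add])
      have h2 : HDer R ((cjs p.1 ::ₘ 0, some p.2) ::ₘ _) :=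
        cjsAntH p.1 0 (hder_of_eq h1 (seq_congr (by simp)))
      have h3 := HDer.implR (cjs p.1) p.2 h2
      have h4 : HDer R ((c.map (fun p => (((p.1 : Multiset Formula), some p.2) : Sequent)) :
          Multiset Sequent) + ((((0 : Multiset Formula),
            some (Formula.impl (cjs p.1) p.2)) : Sequent) ::ₘ G)) :=
        hder_of_eq h3 (by simp only [← Multiset.singleton_add]; abel)
      have h5 := convComps c _ h4
      exact hder_of_eq h5 (by
        simp only [List.map_cons, ← Multiset.cons_coe, ← Multiset.singleton_add]; abel)

/-- Cut away the components `⇒ F u` against derivations of `F u, Γ* ⇒ φ`. -/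
theorem cutF {Γs : Multiset Formula} {φ : Formula} :
    ∀ (l : List Upper) (G : Hyper),
      (∀ u ∈ l, HDer R ((FU u ::ₘ Γs, some φ) ::ₘ 0)) →
      HDer R ((l.map (fun u => (((0 : Multiset Formula), some (FU u)) : Sequent)) :
          Multiset Sequent) + ((Γs, some φ) ::ₘ G)) →
      HDer R ((Γs, some φ) ::ₘ G)
  | [], G, _, h => by simpa using h
  | u :: l, G, hb, h => by
      set K : Hyper := (l.map (fun u => (((0 : Multiset Formula), some (FU u)) : Sequent)) :
          Multiset Sequent) + ((Γs, some φ) ::ₘ G) with hK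
      have h1 : HDer R ((((0 : Multiset Formula), some (FU u)) : Sequent) ::ₘ K) :=
        hder_of_eq h (by simp only [hK, List.map_cons, ← Multiset.cons_coe, Multiset.cons_add])
      have h2 : HDer R ((FU u ::ₘ Γs, some φ) ::ₘ K) := hsingle K (by simpa using hb u (by simp))
      have h3 := HDer.cut (FU u) h1 h2
      have h4 : HDer R ((l.map (fun u => (((0 : Multiset Formula), some (FU u)) : Sequent)) :
          Multiset Sequent) + ((Γs, some φ) ::ₘ ((Γs, some φ) ::ₘ G))) :=
        hder_of_eq h3 (by
          simp only [hK, zero_add, ← Multiset.singleton_add]; abel)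
      have h5 := cutF l ((Γs, some φ) ::ₘ G) (fun u hu => hb u (by simp [hu])) h4
      exact HDer.ec _ h5

theorem nj_to_hlj {T : Set Upper} {Γ : List Formula} {φ : Formula}
    (h : NJD R T Γ φ) :
    ∀ L : List Upper, (∀ u ∈ T, u ∈ L) →
      HDer R (((Γ : Multiset Formula) + (L.map FU : Multiset Formula), some φ) ::ₘ 0) := by
  induction h with
  | @hyp T Γ φ hm =>
      intro L hL
      exact memAnte (by simp [hm])
  | conjI h1 h2 ih1 ih2 =>
      intro L hL
      exact HDer.conjR _ _ (ih1 L hL) (ih2 L hL)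
  | @conjE1 T Γ φ ψ h ih =>
      intro L hL
      have h2 : HDer R ((Formula.conj φ ψ ::ₘ 0, some φ) ::ₘ 0) :=
        HDer.conjL φ ψ (axW _)
      have h3 := HDer.cut _ (ih L hL) h2
      exact hder_of_eq h3 (seq_congr (by simp))
  | @conjE2 T Γ φ ψ h ih =>
      intro L hL
      have h2 : HDer R ((Formula.conj φ ψ ::ₘ 0, some ψ) ::ₘ 0) :=
        HDer.conjL φ ψ (HDer.iw φ (axW _))
      have h3 := HDer.cut _ (ih L hL) h2
      exact hder_of_eq h3 (seq_congr (by simp))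
  | disjI1 h ih => intro L hL; exact HDer.disjR1 _ _ (ih L hL)
  | disjI2 h ih => intro L hL; exact HDer.disjR2 _ _ (ih L hL)
  | @disjE T Γ φ ψ χ h h1 h2 ih ih1 ih2 =>
      intro L hL
      set Γs : Multiset Formula := (Γ : Multiset Formula) + (L.map FU : Multiset Formula)
        with hΓs
      have e1 : HDer R ((φ ::ₘ Γs, some χ) ::ₘ 0) :=
        hder_of_eq (ih1 L hL) (seq_congr (by
          simp only [Γs, ← Multiset.cons_coe, Multiset.cons_add]))
      have e2 : HDer R ((ψ ::ₘ Γs, some χ) ::ₘ 0) :=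
        hder_of_eq (ih2 L hL) (seq_congr (by
          simp only [Γs, ← Multiset.cons_coe, Multiset.cons_add]))
      have h3 := HDer.cut _ (ih L hL) (HDer.disjL φ ψ e1 e2)
      have h4 := ctrM (R := R) Γs (Γ := 0)
        (hder_of_eq h3 (seq_congr (by rw [← hΓs]; simp)))
      exact hder_of_eq h4 (seq_congr (by simp))
  | @implI T Γ φ ψ h ih =>
      intro L hL
      refine HDer.implR φ ψ (hder_of_eq (ih L hL) (seq_congr ?_))
      simp only [← Multiset.cons_coe, Multiset.cons_add]
  | @implE T Γ φ ψ h1 h2 ih1 ih2 =>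
      intro L hL
      set Γs : Multiset Formula := (Γ : Multiset Formula) + (L.map FU : Multiset Formula)
        with hΓs
      have h3 : HDer R ((Formula.impl φ ψ ::ₘ Γs, some ψ) ::ₘ 0) :=
        HDer.implL φ ψ (ih2 L hL) (axW _)
      have h4 := HDer.cut _ (ih1 L hL) h3
      have h5 := ctrM (R := R) Γs (Γ := 0)
        (hder_of_eq h4 (seq_congr (by rw [← hΓs]; simp)))
      exact hder_of_eq h5 (seq_congr (by simp))
  | @botE T Γ φ h ih =>
      intro L hL
      have h2 : HDer R ((Formula.bot ::ₘ 0, some φ) ::ₘ 0) := botW 0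
      have h3 := HDer.cut _ (ih L hL) h2
      exact hder_of_eq h3 (seq_congr (by simp))
  | @upper T Γ u hu hσ hδ ihσ ihδ =>
      intro L hL
      set Γs : Multiset Formula := (Γ : Multiset Formula) + (L.map FU : Multiset Formula)
        with hΓs
      have hFmem : FU u ∈ Γs := by
        simp only [hΓs, Multiset.mem_add, Multiset.mem_coe]
        exact Or.inr (List.mem_map.2 ⟨u, hL u hu, rfl⟩)
      have h1 : HDer R ((Γs, some (cjs u.sigmas)) ::ₘ 0) :=
        cjsIntroH _ (fun σ hσ' => ihσ σ hσ' L hL)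
      have h2 : HDer R ((djs u.deltas ::ₘ Γs, some u.tgt) ::ₘ 0) :=
        djsElimH _ (fun δ hδ' => hder_of_eq (ihδ δ hδ' L hL) (seq_congr (by
          simp only [Γs, ← Multiset.cons_coe, Multiset.cons_add])))
      have h3 : HDer R ((FU u ::ₘ Γs, some u.tgt) ::ₘ 0) :=
        HDer.implL (cjs u.sigmas) (djs u.deltas) h1 h2
      exact contractMem hFmem h3
  | @nr T Γ φ v w hb ih =>
      intro L hL
      set Γs : Multiset Formula := (Γ : Multiset Formula) + (L.map FU : Multiset Formula)
        with hΓs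
      set k := R.comps.length with hk
      set ctxPi : ℕ → Formula := fun i => djs ((mkUpper R v w i).deltas) with hctxPi
      -- apply the rule (Hr)
      have hprem : ∀ i : Fin R.comps.length, ∀ r ∈ (R.comps.get i).2,
          HDer R ((v r.1 r.2 ::ₘ (0 : Multiset Formula), some (ctxPi i)) ::ₘ
            ((Γs, some φ) ::ₘ 0)) := by
        intro i r hr
        have hgd : R.comps.getD (i : ℕ) (0, []) = R.comps[(i : ℕ)] := by
          rw [List.getD_eq_getElem?_getD, List.getElem?_eq_getElem i.isLt,
            Option.getD_some]
        have hr' : r ∈ (R.comps[(i : ℕ)]).2 := by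
          rw [List.get_eq_getElem] at hr; exact hr
        have hne : (R.comps[(i : ℕ)]).2 ≠ [] := by
          intro hcon; rw [hcon] at hr'; simp at hr'
        have hdel : (mkUpper R v w i).deltas =
            (R.comps[(i : ℕ)]).2.map (fun r => v r.1 r.2) := by
          simp [mkUpper, hgd, hne]
        have hmem : v r.1 r.2 ∈ (mkUpper R v w i).deltas := by
          rw [hdel]
          exact List.mem_map.2 ⟨r, hr', rfl⟩
        exact djsIntroH _ hmem (axW 0)
      have hhr := HDer.hr (R := R) v ((Γs, some φ) ::ₘ 0) (fun _ => 0) ctxPi hprem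
      -- convert components to implication form
      have hconv := convComps (R := R)
        (List.ofFn (fun i : Fin R.comps.length => ((mkUpper R v w (i : ℕ)).sigmas, ctxPi i)))
        ((Γs, some φ) ::ₘ 0)
        (hder_of_eq hhr (by
          refine congrArg (fun l : List Sequent => ((l : Multiset Sequent)) + ((Γs, some φ) ::ₘ 0)) ?_
          rw [List.map_ofFn]
          refine congrArg List.ofFn (funext fun i => ?_)
          show ((sigMS R v (i : ℕ) + 0, some (ctxPi (i : ℕ))) : Sequent) = _
          rw [add_zero]
          rfl))
      -- cut against the branch derivations
      refine cutF (List.ofFn (fun i : Fin R.comps.length => mkUpper R v w (i : ℕ))) 0 ?_ ?_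
      · intro u hu
        obtain ⟨i, rfl⟩ := List.mem_ofFn.1 hu
        have := ih i (mkUpper R v w (i : ℕ) :: L) (by
          intro u' hu'
          rcases Set.mem_insert_iff.1 hu' with rfl | hu'
          · exact List.mem_cons_self
          · exact List.mem_cons_of_mem _ (hL u' hu'))
        refine hder_of_eq this (seq_congr ?_)
        rw [hΓs]
        simp only [List.map_cons, ← Multiset.cons_coe, ← Multiset.singleton_add]; abel
      · refine hder_of_eq hconv (by
          refine congrArg (fun l : List Sequent => ((l : Multiset Sequent)) + ((Γs, some φ) ::ₘ 0)) ?_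
          rw [List.map_ofFn, List.map_ofFn]
          rfl)

end ToHLJ

/-! ### NJ toolkit -/

section NJ

variable {R : HLRule}

theorem njWeak {T : Set Upper} {Γ : List Formula} {φ : Formula}
    (h : NJD R T Γ φ) : ∀ {Γ' : List Formula}, Γ ⊆ Γ' → NJD R T Γ' φ := by
  induction h with
  | hyp hm => intro Γ' hs; exact NJD.hyp (hs hm)
  | conjI _ _ ih1 ih2 => intro Γ' hs; exact NJD.conjI (ih1 hs) (ih2 hs)
  | conjE1 _ ih => intro Γ' hs; exact NJD.conjE1 (ih hs)
  | conjE2 _ ih => intro Γ' hs; exact NJD.conjE2 (ih hs)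
  | disjI1 _ ih => intro Γ' hs; exact NJD.disjI1 (ih hs)
  | disjI2 _ ih => intro Γ' hs; exact NJD.disjI2 (ih hs)
  | disjE _ _ _ ih ih1 ih2 =>
      intro Γ' hs
      exact NJD.disjE (ih hs) (ih1 (List.cons_subset_cons _ hs))
        (ih2 (List.cons_subset_cons _ hs))
  | implI _ ih => intro Γ' hs; exact NJD.implI (ih (List.cons_subset_cons _ hs))
  | implE _ _ ih1 ih2 => intro Γ' hs; exact NJD.implE (ih1 hs) (ih2 hs)
  | botE _ ih => intro Γ' hs; exact NJD.botE (ih hs)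
  | upper hu _ _ ihσ ihδ =>
      intro Γ' hs
      exact NJD.upper hu (fun σ hσ => ihσ σ hσ hs)
        (fun δ hδ => ihδ δ hδ (List.cons_subset_cons _ hs))
  | nr v w _ ih => intro Γ' hs; exact NJD.nr v w (fun i => ih i hs)

theorem njWeakT {T : Set Upper} {Γ : List Formula} {φ : Formula}
    (h : NJD R T Γ φ) : ∀ {T' : Set Upper}, T ⊆ T' → NJD R T' Γ φ := by
  induction h with
  | hyp hm => intro T' hs; exact NJD.hyp hm
  | conjI _ _ ih1 ih2 => intro T' hs; exact NJD.conjI (ih1 hs) (ih2 hs)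
  | conjE1 _ ih => intro T' hs; exact NJD.conjE1 (ih hs)
  | conjE2 _ ih => intro T' hs; exact NJD.conjE2 (ih hs)
  | disjI1 _ ih => intro T' hs; exact NJD.disjI1 (ih hs)
  | disjI2 _ ih => intro T' hs; exact NJD.disjI2 (ih hs)
  | disjE _ _ _ ih ih1 ih2 => intro T' hs; exact NJD.disjE (ih hs) (ih1 hs) (ih2 hs)
  | implI _ ih => intro T' hs; exact NJD.implI (ih hs)
  | implE _ _ ih1 ih2 => intro T' hs; exact NJD.implE (ih1 hs) (ih2 hs)
  | botE _ ih => intro T' hs; exact NJD.botE (ih hs)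
  | upper hu _ _ ihσ ihδ =>
      intro T' hs
      exact NJD.upper (hs hu) (fun σ hσ => ihσ σ hσ hs) (fun δ hδ => ihδ δ hδ hs)
  | nr v w _ ih =>
      intro T' hs
      exact NJD.nr v w (fun i => ih i (Set.insert_subset_insert hs))

theorem njCut {T : Set Upper} {Γ : List Formula} {A B : Formula}
    (h1 : NJD R T Γ A) (h2 : NJD R T (A :: Γ) B) : NJD R T Γ B :=
  NJD.implE (NJD.implI h2) h1

theorem njCjsIntro {T : Set Upper} {Γ : List Formula} :
    ∀ {l : List Formula}, (∀ a ∈ l, NJD R T Γ a) → NJD R T Γ (cjs l)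
  | [], _ => NJD.implI (NJD.hyp (List.mem_cons_self))
  | a :: l, h =>
      NJD.conjI (h a (by simp)) (njCjsIntro (fun b hb => h b (by simp [hb])))

theorem njCjsElim {T : Set Upper} {Γ : List Formula} :
    ∀ {l : List Formula}, NJD R T Γ (cjs l) → ∀ a ∈ l, NJD R T Γ a
  | b :: l, h, a, hm => by
      rcases List.mem_cons.1 hm with rfl | hm
      · exact NJD.conjE1 h
      · exact njCjsElim (NJD.conjE2 h) a hm

theorem njCjsMIntro {T : Set Upper} {Γ : List Formula} {M : Multiset Formula}
    (h : ∀ a ∈ M, NJD R T Γ a) : NJD R T Γ (cjs M.toList) :=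
  njCjsIntro (fun a ha => h a (by rwa [← Multiset.mem_toList]))

theorem njCjsMElim {T : Set Upper} {Γ : List Formula} {M : Multiset Formula}
    (h : NJD R T Γ (cjs M.toList)) {a : Formula} (ha : a ∈ M) : NJD R T Γ a :=
  njCjsElim h a (by rwa [Multiset.mem_toList])

theorem njDjsElim {T : Set Upper} {χ : Formula} :
    ∀ {l : List Formula} {Γ : List Formula}, NJD R T Γ (djs l) →
      (∀ a ∈ l, NJD R T (a :: Γ) χ) → NJD R T Γ χ
  | [], _, h, _ => NJD.botE h
  | a :: l, Γ, h, hc => by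
      refine NJD.disjE h (hc a (by simp)) ?_
      refine njDjsElim (NJD.hyp (List.mem_cons_self)) ?_
      intro b hb
      exact njWeak (hc b (by simp [hb]))
        (List.cons_subset_cons _ (List.subset_cons_self _ _))

/-- Interpretation of a hypersequent: continuation-passing validity in NJ + Nr. -/
def HV (R : HLRule) (H : Hyper) : Prop :=
  ∀ (T : Set Upper) (Δ : List Formula) (χ : Formula),
    (∀ s ∈ H, NJD R T (ints s :: Δ) χ) → NJD R T Δ χ

theorem onePrem {s₁ s₀ : Sequent} {G : Hyper}
    (h1 : HV R (s₁ ::ₘ G))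
    (himp : ∀ (T : Set Upper) (Δ : List Formula), NJD R T (ints s₁ :: Δ) (ints s₀)) :
    HV R (s₀ ::ₘ G) := by
  intro T Δ χ conts
  refine h1 T Δ χ ?_
  intro t ht
  rcases Multiset.mem_cons.1 ht with rfl | ht
  · refine njCut (himp T Δ) ?_
    exact njWeak (conts s₀ (Multiset.mem_cons_self _ _))
      (List.cons_subset_cons _ (List.subset_cons_self _ _))
  · exact conts t (Multiset.mem_cons_of_mem ht)

theorem twoPrem {s₁ s₂ s₀ : Sequent} {G : Hyper}
    (h1 : HV R (s₁ ::ₘ G)) (h2 : HV R (s₂ ::ₘ G))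
    (himp : ∀ (T : Set Upper) (Δ : List Formula),
      NJD R T (ints s₂ :: ints s₁ :: Δ) (ints s₀)) :
    HV R (s₀ ::ₘ G) := by
  intro T Δ χ conts
  refine h1 T Δ χ ?_
  intro t ht
  rcases Multiset.mem_cons.1 ht with rfl | ht
  · refine h2 T (ints t :: Δ) χ ?_
    intro t' ht'
    rcases Multiset.mem_cons.1 ht' with rfl | ht'
    · refine njCut (himp T Δ) ?_
      refine njWeak (conts s₀ (Multiset.mem_cons_self _ _)) ?_
      exact List.cons_subset_cons _
        (List.subset_cons_of_subset _ (List.subset_cons_self _ _))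
    · refine njWeak (conts t' (Multiset.mem_cons_of_mem ht')) ?_
      exact List.cons_subset_cons _ (List.subset_cons_self _ _)
  · exact conts t (Multiset.mem_cons_of_mem ht)

/-- Accumulate interpretations of the premisses of (Hr) into the context. -/
theorem accumPrem {T : Set Upper} {χ : Formula} {G : Hyper} :
    ∀ (prem : List Sequent), (∀ s ∈ prem, HV R (s ::ₘ G)) →
      ∀ (Δ : List Formula), (∀ s ∈ G, NJD R T (ints s :: Δ) χ) →
      (∀ Δ' : List Formula, Δ ⊆ Δ' → (∀ s ∈ prem, ints s ∈ Δ') → NJD R T Δ' χ) →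
      NJD R T Δ χ
  | [], _, Δ, _, k => k Δ (List.Subset.refl _) (by simp)
  | s :: prem, hp, Δ, hG, k => by
      refine hp s (by simp) T Δ χ ?_
      intro t ht
      rcases Multiset.mem_cons.1 ht with heq | ht
      · refine accumPrem prem (fun u hu => hp u (by simp [hu])) (ints t :: Δ) ?_ ?_
        · intro u hu
          refine njWeak (hG u hu) ?_
          exact List.cons_subset_cons _ (List.subset_cons_self _ _)
        · intro Δ' hsub hall
          refine k Δ' (fun a ha => hsub (List.mem_cons_of_mem _ ha)) ?_
          intro u hu
          rcases List.mem_cons.1 hu with rfl | hu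
          · exact heq ▸ hsub (List.mem_cons_self)
          · exact hall u hu
      · exact hG t ht

end NJ

/-! ### HLJ + Hr to NJ + Nr -/

section ToNJ

variable {R : HLRule}

theorem ints_def (Γ : Multiset Formula) (Po : Option Formula) :
    ints (Γ, Po) = Formula.impl (cjs Γ.toList) (Po.getD Formula.bot) := rfl

theorem njCjsMono {T : Set Upper} {Γ : List Formula} {M N : Multiset Formula}
    (h : NJD R T Γ (cjs M.toList)) (hsub : ∀ a ∈ N, a ∈ M) :
    NJD R T Γ (cjs N.toList) :=
  njCjsMIntro (fun a ha => njCjsMElim h (hsub a ha))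

theorem hlj_to_nj {H : Hyper} (h : HDer R H) : HV R H := by
  induction h with
  | ax φc =>
      intro T Δ χ conts
      refine njCut (B := χ) ?_ (conts ({φc}, some φc) (Multiset.mem_singleton_self _))
      refine NJD.implI ?_
      exact njCjsMElim (NJD.hyp (List.mem_cons_self)) (Multiset.mem_singleton_self _)
  | botL Po =>
      intro T Δ χ conts
      refine njCut (B := χ) ?_ (conts ({Formula.bot}, Po) (Multiset.mem_singleton_self _))
      refine NJD.implI ?_
      exact NJD.botE
        (njCjsMElim (NJD.hyp (List.mem_cons_self)) (Multiset.mem_singleton_self _))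
  | @disjL G Γ Po φc ψc h1 h2 ih1 ih2 =>
      refine twoPrem ih1 ih2 ?_
      intro T Δ
      refine NJD.implI ?_
      have hc : NJD R T (cjs ((Formula.disj φc ψc ::ₘ Γ)).toList ::
          ints (ψc ::ₘ Γ, Po) :: ints (φc ::ₘ Γ, Po) :: Δ)
          (cjs ((Formula.disj φc ψc ::ₘ Γ)).toList) :=
        NJD.hyp (List.mem_cons_self)
      refine NJD.disjE (njCjsMElim hc (Multiset.mem_cons_self _ _)) ?_ ?_
      · refine NJD.implE
          (NJD.hyp (show ints (φc ::ₘ Γ, Po) ∈ _ by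
            exact List.mem_cons_of_mem _ (List.mem_cons_of_mem _
              (List.mem_cons_of_mem _ (List.mem_cons_self))))) ?_
        refine njCjsMIntro ?_
        intro a ha
        rcases Multiset.mem_cons.1 ha with rfl | ha
        · exact NJD.hyp (List.mem_cons_self)
        · exact njCjsMElim (njWeak hc (List.subset_cons_self _ _))
            (Multiset.mem_cons_of_mem ha)
      · refine NJD.implE
          (NJD.hyp (show ints (ψc ::ₘ Γ, Po) ∈ _ by
            exact List.mem_cons_of_mem _ (List.mem_cons_of_mem _
              (List.mem_cons_self)))) ?_
        refine njCjsMIntro ?_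
        intro a ha
        rcases Multiset.mem_cons.1 ha with rfl | ha
        · exact NJD.hyp (List.mem_cons_self)
        · exact njCjsMElim (njWeak hc (List.subset_cons_self _ _))
            (Multiset.mem_cons_of_mem ha)
  | @disjR1 G Γ φc ψc h1 ih1 =>
      refine onePrem ih1 ?_
      intro T Δ
      refine NJD.implI ?_
      refine NJD.disjI1 ?_
      exact NJD.implE
        (NJD.hyp (List.mem_cons_of_mem _ (List.mem_cons_self)))
        (NJD.hyp (List.mem_cons_self))
  | @disjR2 G Γ φc ψc h1 ih1 =>
      refine onePrem ih1 ?_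
      intro T Δ
      refine NJD.implI ?_
      refine NJD.disjI2 ?_
      exact NJD.implE
        (NJD.hyp (List.mem_cons_of_mem _ (List.mem_cons_self)))
        (NJD.hyp (List.mem_cons_self))
  | @conjL G Γ Po φc ψc h1 ih1 =>
      refine onePrem ih1 ?_
      intro T Δ
      refine NJD.implI ?_
      have hc : NJD R T (cjs ((Formula.conj φc ψc ::ₘ Γ)).toList ::
          ints (φc ::ₘ ψc ::ₘ Γ, Po) :: Δ)
          (cjs ((Formula.conj φc ψc ::ₘ Γ)).toList) :=
        NJD.hyp (List.mem_cons_self)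
      have hcj := njCjsMElim hc (Multiset.mem_cons_self _ _)
      refine NJD.implE
        (NJD.hyp (List.mem_cons_of_mem _ (List.mem_cons_self))) ?_
      refine njCjsMIntro ?_
      intro a ha
      rcases Multiset.mem_cons.1 ha with rfl | ha
      · exact NJD.conjE1 hcj
      · rcases Multiset.mem_cons.1 ha with rfl | ha
        · exact NJD.conjE2 hcj
        · exact njCjsMElim hc (Multiset.mem_cons_of_mem ha)
  | @conjR G Γ φc ψc h1 h2 ih1 ih2 =>
      refine twoPrem ih1 ih2 ?_
      intro T Δ
      refine NJD.implI ?_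
      refine NJD.conjI ?_ ?_
      · exact NJD.implE
          (NJD.hyp (List.mem_cons_of_mem _ (List.mem_cons_of_mem _
            (List.mem_cons_self))))
          (NJD.hyp (List.mem_cons_self))
      · exact NJD.implE
          (NJD.hyp (List.mem_cons_of_mem _ (List.mem_cons_self)))
          (NJD.hyp (List.mem_cons_self))
  | @implL G Γ Po φc ψc h1 h2 ih1 ih2 =>
      refine twoPrem ih1 ih2 ?_
      intro T Δ
      refine NJD.implI ?_
      have hc : NJD R T (cjs ((Formula.impl φc ψc ::ₘ Γ)).toList ::
          ints (ψc ::ₘ Γ, Po) :: ints (Γ, some φc) :: Δ)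
          (cjs ((Formula.impl φc ψc ::ₘ Γ)).toList) :=
        NJD.hyp (List.mem_cons_self)
      have hφ : NJD R T (cjs ((Formula.impl φc ψc ::ₘ Γ)).toList ::
          ints (ψc ::ₘ Γ, Po) :: ints (Γ, some φc) :: Δ) φc :=
        NJD.implE
          (NJD.hyp (List.mem_cons_of_mem _ (List.mem_cons_of_mem _
            (List.mem_cons_self))))
          (njCjsMono hc (fun a ha => Multiset.mem_cons_of_mem ha))
      have hψ : NJD R T (cjs ((Formula.impl φc ψc ::ₘ Γ)).toList ::
          ints (ψc ::ₘ Γ, Po) :: ints (Γ, some φc) :: Δ) ψc :=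
        NJD.implE (njCjsMElim hc (Multiset.mem_cons_self _ _)) hφ
      refine NJD.implE
        (NJD.hyp (List.mem_cons_of_mem _ (List.mem_cons_self))) ?_
      refine njCjsMIntro ?_
      intro a ha
      rcases Multiset.mem_cons.1 ha with rfl | ha
      · exact hψ
      · exact njCjsMElim hc (Multiset.mem_cons_of_mem ha)
  | @implR G Γ φc ψc h1 ih1 =>
      refine onePrem ih1 ?_
      intro T Δ
      refine NJD.implI ?_
      refine NJD.implI ?_
      have hc : NJD R T (φc :: cjs (Γ).toList :: ints (φc ::ₘ Γ, some ψc) :: Δ)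
          (cjs (Γ).toList) :=
        NJD.hyp (List.mem_cons_of_mem _ (List.mem_cons_self))
      refine NJD.implE
        (NJD.hyp (List.mem_cons_of_mem _ (List.mem_cons_of_mem _
          (List.mem_cons_self)))) ?_
      refine njCjsMIntro ?_
      intro a ha
      rcases Multiset.mem_cons.1 ha with rfl | ha
      · exact NJD.hyp (List.mem_cons_self)
      · exact njCjsMElim hc ha
  | @iw G Γ Po φc h1 ih1 =>
      refine onePrem ih1 ?_
      intro T Δ
      refine NJD.implI ?_
      have hc : NJD R T (cjs ((φc ::ₘ Γ)).toList :: ints (Γ, Po) :: Δ)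
          (cjs ((φc ::ₘ Γ)).toList) := NJD.hyp (List.mem_cons_self)
      exact NJD.implE
        (NJD.hyp (List.mem_cons_of_mem _ (List.mem_cons_self)))
        (njCjsMono hc (fun a ha => Multiset.mem_cons_of_mem ha))
  | @ic G Γ Po φc h1 ih1 =>
      refine onePrem ih1 ?_
      intro T Δ
      refine NJD.implI ?_
      have hc : NJD R T (cjs ((φc ::ₘ Γ)).toList :: ints (φc ::ₘ φc ::ₘ Γ, Po) :: Δ)
          (cjs ((φc ::ₘ Γ)).toList) := NJD.hyp (List.mem_cons_self)
      refine NJD.implE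
        (NJD.hyp (List.mem_cons_of_mem _ (List.mem_cons_self))) ?_
      refine njCjsMono hc ?_
      intro a ha
      rcases Multiset.mem_cons.1 ha with rfl | ha
      · exact Multiset.mem_cons_self _ _
      · exact ha
  | @cut G Γ Γ' Po φc h1 h2 ih1 ih2 =>
      refine twoPrem ih1 ih2 ?_
      intro T Δ
      refine NJD.implI ?_
      have hc : NJD R T (cjs ((Γ + Γ')).toList ::
          ints (φc ::ₘ Γ', Po) :: ints (Γ, some φc) :: Δ)
          (cjs ((Γ + Γ')).toList) := NJD.hyp (List.mem_cons_self)
      have hφ : NJD R T (cjs ((Γ + Γ')).toList ::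
          ints (φc ::ₘ Γ', Po) :: ints (Γ, some φc) :: Δ) φc :=
        NJD.implE
          (NJD.hyp (List.mem_cons_of_mem _ (List.mem_cons_of_mem _
            (List.mem_cons_self))))
          (njCjsMono hc (fun a ha => Multiset.mem_add.2 (Or.inl ha)))
      refine NJD.implE
        (NJD.hyp (List.mem_cons_of_mem _ (List.mem_cons_self))) ?_
      refine njCjsMIntro ?_
      intro a ha
      rcases Multiset.mem_cons.1 ha with rfl | ha
      · exact hφ
      · exact njCjsMElim hc (Multiset.mem_add.2 (Or.inr ha))
  | @ew G s h1 ih1 =>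
      intro T Δ χ conts
      exact ih1 T Δ χ (fun t ht => conts t (Multiset.mem_cons_of_mem ht))
  | @ec G s h1 ih1 =>
      intro T Δ χ conts
      refine ih1 T Δ χ ?_
      intro t ht
      rcases Multiset.mem_cons.1 ht with heq | ht
      · exact heq ▸ conts s (Multiset.mem_cons_self _ _)
      · exact conts t ht
  | @hr v G ctxΓ ctxPi hprem ihp =>
      intro T Δ χ conts
      have compconts : ∀ i : Fin R.comps.length,
          NJD R T (ints (sigMS R v (i : ℕ) + ctxΓ (i : ℕ), some (ctxPi (i : ℕ))) :: Δ) χ := by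
        intro i
        refine conts _ ?_
        refine Multiset.mem_add.2 (Or.inl ?_)
        refine Multiset.mem_coe.2 ?_
        exact List.mem_ofFn.2 ⟨i, rfl⟩
      have Gconts : ∀ s ∈ G, NJD R T (ints s :: Δ) χ :=
        fun s hs => conts s (Multiset.mem_add.2 (Or.inr hs))
      set prem : List Sequent := (List.finRange R.comps.length).flatMap
        (fun i => ((R.comps.get i).2).map
          (fun r => ((v r.1 r.2 ::ₘ ctxΓ (i : ℕ), some (ctxPi (i : ℕ))) : Sequent)))
        with hpremdef
      refine accumPrem prem ?_ Δ Gconts ?_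
      · intro s hs
        rw [hpremdef] at hs
        obtain ⟨i, _, hmem⟩ := List.mem_flatMap.1 hs
        obtain ⟨r, hr', rfl⟩ := List.mem_map.1 hmem
        exact ihp i r hr'
      · intro Δ' hsub hall
        refine NJD.nr v ctxPi ?_
        intro i
        have dInt : NJD R (insert (mkUpper R v ctxPi (i : ℕ)) T) Δ'
            (ints (sigMS R v (i : ℕ) + ctxΓ (i : ℕ), some (ctxPi (i : ℕ)))) := by
          refine NJD.implI ?_
          have hc : NJD R (insert (mkUpper R v ctxPi (i : ℕ)) T)
              (cjs ((sigMS R v (i : ℕ) + ctxΓ (i : ℕ))).toList :: Δ')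
              (cjs ((sigMS R v (i : ℕ) + ctxΓ (i : ℕ))).toList) :=
            NJD.hyp (List.mem_cons_self)
          refine NJD.upper (u := mkUpper R v ctxPi (i : ℕ)) (Set.mem_insert _ _) ?_ ?_
          · intro σ hσ
            refine njCjsMElim hc (Multiset.mem_add.2 (Or.inl ?_))
            show σ ∈ sigMS R v (i : ℕ)
            rw [sigMS_eq v ctxPi]
            exact Multiset.mem_coe.2 hσ
          · intro δ hδ
            have hgd : R.comps.getD (i : ℕ) (0, []) = R.comps.get i := by
              rw [List.getD_eq_getElem?_getD, List.getElem?_eq_getElem i.isLt,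
                Option.getD_some, List.get_eq_getElem]
            have hδ2 : δ ∈ if (R.comps.get i).2 = [] then [Formula.bot]
                else (R.comps.get i).2.map (fun r => v r.1 r.2) := by
              simp only [mkUpper, hgd] at hδ
              exact hδ
            by_cases hemp : (R.comps.get i).2 = []
            · rw [if_pos hemp] at hδ2
              have hbot : δ = Formula.bot := by simpa using hδ2
              subst hbot
              exact NJD.botE (NJD.hyp (List.mem_cons_self))
            · rw [if_neg hemp] at hδ2
              obtain ⟨r, hrmem', rfl⟩ := List.mem_map.1 hδ2
              have hintsmem : ints (v r.1 r.2 ::ₘ ctxΓ (i : ℕ),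
                  some (ctxPi (i : ℕ))) ∈ Δ' := by
                refine hall _ ?_
                rw [hpremdef]
                refine List.mem_flatMap.2 ⟨i, List.mem_finRange i, ?_⟩
                exact List.mem_map.2 ⟨r, hrmem', rfl⟩
              refine NJD.implE (NJD.hyp (List.mem_cons_of_mem _
                (List.mem_cons_of_mem _ hintsmem))) ?_
              refine njCjsMIntro ?_
              intro a ha
              rcases Multiset.mem_cons.1 ha with rfl | ha
              · exact NJD.hyp (List.mem_cons_self)
              · refine njCjsMElim (njWeak hc (List.subset_cons_self _ _))
                  (Multiset.mem_add.2 (Or.inr ha))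
        refine njCut dInt ?_
        refine njWeakT (njWeak (compconts i) (List.cons_subset_cons _ hsub)) ?_
        exact Set.subset_insert _ _

end ToNJ

/-- Theorem: HLJ extended with a hypersequent rule (Hr) of the restricted
form is equivalent to NJ extended with the translated higher-level natural
deduction rule Nr: a formula φ satisfies ⊢_{HLJ+Hr} ⇒ φ iff ⊢_{NJ+Nr} φ. -/
theorem hlj_nj_equivalence (R : HLRule)
    (hvalid : ∀ c ∈ R.comps, ∀ r ∈ c.2,
      r.1 < R.comps.length ∧ r.2 < (R.comps.getD r.1 (0, [])).1)
    (φ : Formula) :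
    HDer R ({((0 : Multiset Formula), some φ)} : Hyper) ↔ NJD R ∅ [] φ := by
  constructor
  · intro h
    refine hlj_to_nj h ∅ [] φ ?_
    intro s hs
    rw [Multiset.mem_singleton] at hs
    subst hs
    refine NJD.implE (φ := cjs ((0 : Multiset Formula)).toList)
      (NJD.hyp (List.mem_cons_self)) ?_
    refine njCjsMIntro ?_
    intro a ha
    exact absurd ha (by simp)
  · intro h
    have h2 := nj_to_hlj h [] (by simp)
    refine hder_of_eq h2 ?_
    simp
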